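/- arXiv:2102.07691 — 2 statements merged into one kernel-verified Lean document; each statement's English description precedes it below -/
import Mathlib

section
/- Let θ be a real skew-symmetric n×n matrix and F a finite group acting on ℤⁿ by automorphisms such that each group element acts by a matrix W with Wᵀ θ W = θ. Define ω'_θ((x,s),(y,t)) = exp(-2πi·⟨θ x, s·y⟩) on the semidirect product ℤⁿ ⋊ F. Then ω'_θ is a 2-cocycle on ℤⁿ ⋊ F. -/
open Matrix Complex

lemma aux_bilin {n : ℕ} (θ W : Matrix (Fin n) (Fin n) ℝ)
    (hW : Wᵀ * θ * W = θ) (u v : Fin n → ℝ) :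
    (θ *ᵥ (W *ᵥ u)) ⬝ᵥ (W *ᵥ v) = (θ *ᵥ u) ⬝ᵥ v := by
  have h1 : (θ *ᵥ (W *ᵥ u)) ⬝ᵥ (W *ᵥ v) = ((Wᵀ * θ * W) *ᵥ u) ⬝ᵥ v := by
    rw [Matrix.mulVec_mulVec, Matrix.dotProduct_mulVec, ← Matrix.mulVec_transpose,
      Matrix.mulVec_mulVec, ← Matrix.mul_assoc]
  rw [h1, hW]

/-- For θ a real skew-symmetric n×n matrix and F a finite group acting on ℤⁿ
through matrices W ∈ GL(n,ℤ) with Wᵀ θ W = θ, the map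
ω'((x,s),(y,t)) = exp(-2πi⟨θx, s·y⟩) is a 2-cocycle on ℤⁿ ⋊ F,
where the semidirect product multiplication is (x,s)(y,t) = (x + s·y, st). -/
theorem stmt_1 {n : ℕ} (θ : Matrix (Fin n) (Fin n) ℝ) (hθ : θᵀ = -θ)
    (F : Type*) [Group F] [Fintype F]
    (φ : F →* Matrix.GeneralLinearGroup (Fin n) ℤ)
    (hsymp : ∀ s : F,
      ((φ s : Matrix (Fin n) (Fin n) ℤ).map (Int.cast : ℤ → ℝ))ᵀ * θ *
        ((φ s : Matrix (Fin n) (Fin n) ℤ).map (Int.cast : ℤ → ℝ)) = θ)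
    (ω : ((Fin n → ℤ) × F) → ((Fin n → ℤ) × F) → ℂ)
    (hω : ∀ (x y : Fin n → ℤ) (s t : F),
      ω (x, s) (y, t) =
        Complex.exp (-(2 * Real.pi * Complex.I) *
          (∑ i : Fin n,
            (θ.mulVec (fun j => ((x j : ℝ)))) i *
              (((φ s : Matrix (Fin n) (Fin n) ℤ).mulVec y) i : ℝ)))) :
    (∀ (x y z : Fin n → ℤ) (s t u : F),
        ω (x, s) (y, t) *
          ω (x + (φ s : Matrix (Fin n) (Fin n) ℤ).mulVec y, s * t) (z, u) =
        ω (x, s) (y + (φ t : Matrix (Fin n) (Fin n) ℤ).mulVec z, t * u) *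
          ω (y, t) (z, u)) ∧
    (∀ (x : Fin n → ℤ) (s : F), ω (x, s) (0, 1) = 1 ∧ ω (0, 1) (x, s) = 1) := by
  set f : ℤ →+* ℝ := Int.castRingHom ℝ
  have hsum : ∀ (x y : Fin n → ℤ) (s : F),
      (∑ i : Fin n, (θ.mulVec (fun j => ((x j : ℝ)))) i *
        (((φ s : Matrix (Fin n) (Fin n) ℤ).mulVec y) i : ℝ)) =
      (θ *ᵥ (fun j => ((x j : ℝ)))) ⬝ᵥ
        (((φ s : Matrix (Fin n) (Fin n) ℤ).map (Int.cast : ℤ → ℝ)) *ᵥ (fun j => ((y j : ℝ)))) := by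
    intro x y s
    refine Finset.sum_congr rfl fun i _ => ?_
    congr 1
    exact f.map_mulVec _ _ i
  have hcastadd : ∀ (x y : Fin n → ℤ) (s : F),
      (fun j => (((x + (φ s : Matrix (Fin n) (Fin n) ℤ).mulVec y) j : ℤ) : ℝ)) =
      (fun j => ((x j : ℝ))) +
        ((φ s : Matrix (Fin n) (Fin n) ℤ).map (Int.cast : ℤ → ℝ)) *ᵥ (fun j => ((y j : ℝ))) := by
    intro x y s
    funext j
    simp only [Pi.add_apply, Int.cast_add]
    congr 1
    exact f.map_mulVec (φ s : Matrix (Fin n) (Fin n) ℤ) y j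
  have hmulmap : ∀ s t : F,
      ((φ (s * t) : Matrix (Fin n) (Fin n) ℤ).map (Int.cast : ℤ → ℝ)) =
      ((φ s : Matrix (Fin n) (Fin n) ℤ).map (Int.cast : ℤ → ℝ)) *
        ((φ t : Matrix (Fin n) (Fin n) ℤ).map (Int.cast : ℤ → ℝ)) := by
    intro s t
    have h1 : (φ (s * t) : Matrix (Fin n) (Fin n) ℤ) =
        (φ s : Matrix (Fin n) (Fin n) ℤ) * (φ t : Matrix (Fin n) (Fin n) ℤ) := by
      rw [_root_.map_mul]; rfl
    rw [h1]
    ext i j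
    simp [Matrix.map_apply, Matrix.mul_apply]
  constructor
  · intro x y z s t u
    set W := ((φ s : Matrix (Fin n) (Fin n) ℤ).map (Int.cast : ℤ → ℝ)) with hWdef
    set V := ((φ t : Matrix (Fin n) (Fin n) ℤ).map (Int.cast : ℤ → ℝ)) with hVdef
    rw [hω, hω, hω, hω, ← Complex.exp_add, ← Complex.exp_add]
    congr 1
    rw [← mul_add, ← mul_add]
    congr 1
    rw [hsum, hsum, hsum, hsum, hcastadd, hcastadd]
    push_cast
    rw [hmulmap]
    set a : Fin n → ℝ := fun j => ((x j : ℝ))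
    set b : Fin n → ℝ := fun j => ((y j : ℝ))
    set c : Fin n → ℝ := fun j => ((z j : ℝ))
    have key : (θ *ᵥ (W *ᵥ b)) ⬝ᵥ (W *ᵥ (V *ᵥ c)) = (θ *ᵥ b) ⬝ᵥ (V *ᵥ c) :=
      aux_bilin θ W (hsymp s) b (V *ᵥ c)
    have expand : (W * V) *ᵥ c = W *ᵥ (V *ᵥ c) := (Matrix.mulVec_mulVec _ _ _).symm
    rw [expand]
    rw [Matrix.mulVec_add, Matrix.mulVec_add, add_dotProduct, dotProduct_add]
    push_cast
    rw [key]
    ring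
  · intro x s
    constructor
    · rw [hω]
      simp [Matrix.mulVec_zero]
    · rw [hω]
      have hv : θ *ᵥ (fun _ : Fin n => (0:ℝ)) = 0 := Matrix.mulVec_zero θ
      simp [hv]
end

section
/- For any real skew-symmetric n×n matrix θ, there exists a positive integer t such that all Pfaffian minors of θ + tZ are strictly positive, where Z is the skew-symmetric matrix with all entries above the diagonal equal to 1. -/
open Matrix

/-- The Pfaffian of a 2m×2m real matrix, via the sum-over-permutations formula
pf(A) = (1/(2^m m!)) Σ_σ sign(σ) Π_{i=1}^{m} A_{σ(2i-1) σ(2i)}. -/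
noncomputable def pfaffian {m : ℕ} (A : Matrix (Fin (2 * m)) (Fin (2 * m)) ℝ) : ℝ :=
  (1 / (2 ^ m * (Nat.factorial m : ℝ))) *
    ∑ σ : Equiv.Perm (Fin (2 * m)), ((Equiv.Perm.sign σ : ℤ) : ℝ) *
      ∏ i : Fin m,
        A (σ ⟨2 * i.val, by have := i.isLt; omega⟩)
          (σ ⟨2 * i.val + 1, by have := i.isLt; omega⟩)

namespace PfAux

open Equiv

variable {m : ℕ}

def p0 (i : Fin m) : Fin (2 * m) := ⟨2 * i.val, by have := i.isLt; omega⟩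
def p1 (i : Fin m) : Fin (2 * m) := ⟨2 * i.val + 1, by have := i.isLt; omega⟩

@[simp] lemma p0_val (i : Fin m) : (p0 i).val = 2 * i.val := rfl
@[simp] lemma p1_val (i : Fin m) : (p1 i).val = 2 * i.val + 1 := rfl

lemma p0_ne_p1 (i j : Fin m) : p0 i ≠ p1 j := by
  intro h; rw [Fin.ext_iff] at h; simp at h; omega

def Q (σ : Equiv.Perm (Fin (2 * m))) : Prop :=
  ∀ i : Fin m, (σ (p0 i)).val / 2 = (σ (p1 i)).val / 2

instance : DecidablePred (Q (m := m)) := fun σ => by unfold Q; infer_instance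

lemma blk_lt (p : Fin (2 * m)) : p.val / 2 < m := by have := p.isLt; omega

def blk (p : Fin (2 * m)) : Fin m := ⟨p.val / 2, blk_lt p⟩

@[simp] lemma blk_val (p : Fin (2 * m)) : (blk p).val = p.val / 2 := rfl

lemma mem_block (p : Fin (2 * m)) : p = p0 (blk p) ∨ p = p1 (blk p) := by
  have := p.isLt
  have h2 : p.val % 2 = 0 ∨ p.val % 2 = 1 := by omega
  rcases h2 with h | h
  · left; rw [Fin.ext_iff]; show p.val = 2 * (p.val / 2); omega
  · right; rw [Fin.ext_iff]; show p.val = 2 * (p.val / 2) + 1; omega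

lemma Q_inv {σ : Equiv.Perm (Fin (2 * m))} (hQ : Q σ) : Q σ⁻¹ := by
  intro k
  rcases mem_block (σ⁻¹ (p0 k)) with hp | hp
  · have hv' : σ (p0 (blk (σ⁻¹ (p0 k)))) = p0 k := by rw [← hp]; simp
    have hQi := hQ (blk (σ⁻¹ (p0 k)))
    rw [hv'] at hQi
    have hab : (p0 k).val ≠ (σ (p1 (blk (σ⁻¹ (p0 k))))).val := by
      rw [← hv']; exact fun h => p0_ne_p1 _ _ (σ.injective (Fin.ext h))
    have hwb : p1 k = σ (p1 (blk (σ⁻¹ (p0 k)))) := by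
      rw [Fin.ext_iff]; simp only [p0_val, p1_val] at hQi hab ⊢; omega
    have hw' : σ⁻¹ (p1 k) = p1 (blk (σ⁻¹ (p0 k))) := by rw [hwb]; simp
    rw [hp, hw']; simp only [p0_val, p1_val]; omega
  · have hv' : σ (p1 (blk (σ⁻¹ (p0 k)))) = p0 k := by rw [← hp]; simp
    have hQi := hQ (blk (σ⁻¹ (p0 k)))
    rw [hv'] at hQi
    have hab : (p0 k).val ≠ (σ (p0 (blk (σ⁻¹ (p0 k))))).val := by
      rw [← hv']; exact fun h => (p0_ne_p1 _ _ (σ.injective (Fin.ext h.symm))).elim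
    have hwb : p1 k = σ (p0 (blk (σ⁻¹ (p0 k)))) := by
      rw [Fin.ext_iff]; simp only [p0_val, p1_val] at hQi hab ⊢; omega
    have hw' : σ⁻¹ (p1 k) = p0 (blk (σ⁻¹ (p0 k))) := by rw [hwb]; simp
    rw [hp, hw']; simp only [p0_val, p1_val]; omega

def F (σ : Equiv.Perm (Fin (2 * m))) : Finset (Fin m) :=
  Finset.univ.filter fun k => ¬ ((σ⁻¹ (p0 k)).val / 2 = (σ⁻¹ (p1 k)).val / 2)

lemma F_empty_iff (σ : Equiv.Perm (Fin (2 * m))) : F σ = ∅ ↔ Q σ := by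
  constructor
  · intro h
    have : Q σ⁻¹ := by
      intro k
      by_contra hk
      have : k ∈ F σ := by simp only [F, Finset.mem_filter, Finset.mem_univ, true_and]; exact hk
      rw [h] at this
      exact absurd this (Finset.notMem_empty k)
    simpa using Q_inv this
  · intro hQ
    ext k
    simp only [F, Finset.mem_filter, Finset.mem_univ, true_and, Finset.notMem_empty,
      iff_false, not_not]
    exact Q_inv hQ k

lemma F_nonempty {σ : Equiv.Perm (Fin (2 * m))} (h : ¬ Q σ) : (F σ).Nonempty := by
  rw [Finset.nonempty_iff_ne_empty]
  intro hF
  exact h ((F_empty_iff σ).1 hF)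


def Jm (m : ℕ) : Matrix (Fin (2 * m)) (Fin (2 * m)) ℝ :=
  Matrix.of fun i j => if i < j then (1 : ℝ) else if j < i then -1 else 0

lemma Jm_apply (a b : Fin (2 * m)) :
    Jm m a b = if a < b then (1 : ℝ) else if b < a then -1 else 0 := rfl

noncomputable def pfTerm (A : Matrix (Fin (2 * m)) (Fin (2 * m)) ℝ)
    (σ : Equiv.Perm (Fin (2 * m))) : ℝ :=
  ((Equiv.Perm.sign σ : ℤ) : ℝ) * ∏ i : Fin m, A (σ (p0 i)) (σ (p1 i))

lemma swap_lt_iff {u w a b : Fin (2 * m)} (huw : u.val + 1 = w.val) (hab : a ≠ b)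
    (h1 : ¬(a = u ∧ b = w)) (h2 : ¬(a = w ∧ b = u)) :
    (Equiv.swap u w a < Equiv.swap u w b ↔ a < b) := by
  simp only [Equiv.swap_apply_def]
  simp only [Fin.lt_def, Fin.ext_iff, ne_eq] at *
  split_ifs <;> omega

lemma J_swap {u w a b : Fin (2 * m)} (huw : u.val + 1 = w.val) (hab : a ≠ b)
    (h1 : ¬(a = u ∧ b = w)) (h2 : ¬(a = w ∧ b = u)) :
    Jm m (Equiv.swap u w a) (Equiv.swap u w b) = Jm m a b := by
  rw [Jm_apply, Jm_apply]
  rw [if_congr (swap_lt_iff huw hab h1 h2) rfl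
    (if_congr (swap_lt_iff huw (Ne.symm hab) (fun h => h2 ⟨h.2, h.1⟩) (fun h => h1 ⟨h.2, h.1⟩)) rfl rfl)]

lemma pfTerm_swap (σ : Equiv.Perm (Fin (2 * m))) (k : Fin m)
    (hk : (σ⁻¹ (p0 k)).val / 2 ≠ (σ⁻¹ (p1 k)).val / 2) :
    pfTerm (Jm m) (Equiv.swap (p0 k) (p1 k) * σ) = - pfTerm (Jm m) σ := by
  unfold pfTerm
  rw [Equiv.Perm.sign_mul, Equiv.Perm.sign_swap (p0_ne_p1 k k)]
  have hprod : ∏ i : Fin m, Jm m ((Equiv.swap (p0 k) (p1 k) * σ) (p0 i))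
      ((Equiv.swap (p0 k) (p1 k) * σ) (p1 i)) = ∏ i : Fin m, Jm m (σ (p0 i)) (σ (p1 i)) := by
    refine Finset.prod_congr rfl fun i _ => ?_
    simp only [Equiv.Perm.mul_apply]
    refine J_swap (by simp) (fun h => p0_ne_p1 i i (σ.injective h)) ?_ ?_
    · rintro ⟨e1, e2⟩
      apply hk
      have h1 : σ⁻¹ (p0 k) = p0 i := by rw [← e1]; simp
      have h2 : σ⁻¹ (p1 k) = p1 i := by rw [← e2]; simp
      rw [h1, h2]; simp only [p0_val, p1_val]; omega
    · rintro ⟨e1, e2⟩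
      apply hk
      have h1 : σ⁻¹ (p0 k) = p1 i := by rw [← e2]; simp
      have h2 : σ⁻¹ (p1 k) = p0 i := by rw [← e1]; simp
      rw [h1, h2]; simp only [p0_val, p1_val]; omega
  rw [hprod]
  push_cast
  ring

lemma F_swap (k : Fin m) (σ : Equiv.Perm (Fin (2 * m))) :
    F (Equiv.swap (p0 k) (p1 k) * σ) = F σ := by
  ext k'
  simp only [F, Finset.mem_filter, Finset.mem_univ, true_and]
  rw [_root_.mul_inv_rev, Equiv.swap_inv]
  simp only [Equiv.Perm.mul_apply]
  rcases eq_or_ne k' k with rfl | hne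
  · rw [Equiv.swap_apply_left, Equiv.swap_apply_right]
    exact ⟨fun h => fun hh => h hh.symm, fun h => fun hh => h hh.symm⟩
  · have n1 : p0 k' ≠ p0 k := fun h => by rw [Fin.ext_iff] at h; simp at h; omega
    have n2 : p0 k' ≠ p1 k := p0_ne_p1 k' k
    have n3 : p1 k' ≠ p0 k := fun h => (p0_ne_p1 k k' h.symm).elim
    have n4 : p1 k' ≠ p1 k := fun h => by
      rw [Fin.ext_iff] at h; simp at h; exact hne (Fin.ext h)
    rw [Equiv.swap_apply_of_ne_of_ne n1 n2, Equiv.swap_apply_of_ne_of_ne n3 n4]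

lemma sum_notQ : ∑ σ ∈ Finset.univ.filter (fun σ => ¬ Q σ), pfTerm (Jm m) σ = 0 := by
  have hQmem : ∀ σ : Equiv.Perm (Fin (2 * m)),
      σ ∈ Finset.univ.filter (fun σ => ¬ Q σ) ↔ ¬ Q σ := by
    intro σ; simp
  refine Finset.sum_involution
    (fun σ hσ => Equiv.swap (p0 ((F σ).min' (F_nonempty ((hQmem σ).1 hσ))))
      (p1 ((F σ).min' (F_nonempty ((hQmem σ).1 hσ)))) * σ) ?_ ?_ ?_ ?_
  · intro σ hσ
    rw [pfTerm_swap]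
    · ring
    · have := (F σ).min'_mem (F_nonempty ((hQmem σ).1 hσ))
      simp only [F, Finset.mem_filter] at this
      exact this.2
  · intro σ hσ _
    intro h
    have h2 := congrArg (fun τ : Equiv.Perm (Fin (2 * m)) =>
      τ (σ⁻¹ (p0 ((F σ).min' (F_nonempty ((hQmem σ).1 hσ)))))) h
    simp only [Equiv.Perm.mul_apply, Equiv.Perm.inv_def, Equiv.apply_symm_apply] at h2
    rw [Equiv.swap_apply_left] at h2
    exact p0_ne_p1 _ _ h2.symm
  · intro σ hσ
    rw [hQmem, ← F_empty_iff, F_swap, F_empty_iff]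
    exact (hQmem σ).1 hσ
  · intro σ hσ
    simp only [F_swap, ← mul_assoc, Equiv.swap_mul_self, one_mul]


def eqv (m : ℕ) : Fin m × Fin 2 ≃ Fin (2 * m) where
  toFun := fun x => ⟨2 * x.1.val + x.2.val, by have := x.1.isLt; have := x.2.isLt; omega⟩
  invFun := fun p => (⟨p.val / 2, blk_lt p⟩, ⟨p.val % 2, by omega⟩)
  left_inv := by
    rintro ⟨i, r⟩
    have := i.isLt; have := r.isLt
    refine Prod.ext (Fin.ext ?_) (Fin.ext ?_) <;> simp <;> omega
  right_inv := by
    intro p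
    have := p.isLt
    apply Fin.ext
    simp
    omega

def flip2 (b : Bool) : Equiv.Perm (Fin 2) := if b then Equiv.swap 0 1 else 1

def Psi (τ : Equiv.Perm (Fin m)) (f : Fin m → Bool) : Equiv.Perm (Fin (2 * m)) :=
  (eqv m).permCongr
    ((Equiv.prodCongrLeft fun _ : Fin 2 => τ) * Equiv.prodCongrRight fun i => flip2 (f i))

lemma eqv_symm_p0 (i : Fin m) : (eqv m).symm (p0 i) = (i, 0) := by
  have := i.isLt
  refine Prod.ext (Fin.ext ?_) (Fin.ext ?_) <;> simp [eqv, p0] <;> omega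

lemma eqv_symm_p1 (i : Fin m) : (eqv m).symm (p1 i) = (i, 1) := by
  have := i.isLt
  refine Prod.ext (Fin.ext ?_) (Fin.ext ?_) <;> simp [eqv, p1] <;> omega

lemma Psi_p0 (τ : Equiv.Perm (Fin m)) (f : Fin m → Bool) (i : Fin m) :
    Psi τ f (p0 i) = if f i then p1 (τ i) else p0 (τ i) := by
  unfold Psi
  rw [Equiv.permCongr_apply, eqv_symm_p0]
  rw [Equiv.Perm.mul_apply, Equiv.prodCongrRight_apply]
  cases hf : f i <;>
    simp [flip2, hf, Equiv.prodCongrLeft_apply, eqv, p0, p1, Fin.ext_iff]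

lemma Psi_p1 (τ : Equiv.Perm (Fin m)) (f : Fin m → Bool) (i : Fin m) :
    Psi τ f (p1 i) = if f i then p0 (τ i) else p1 (τ i) := by
  unfold Psi
  rw [Equiv.permCongr_apply, eqv_symm_p1]
  rw [Equiv.Perm.mul_apply, Equiv.prodCongrRight_apply]
  cases hf : f i <;>
    simp [flip2, hf, Equiv.prodCongrLeft_apply, eqv, p0, p1, Fin.ext_iff,
      Equiv.swap_apply_right]

lemma sign_Psi (τ : Equiv.Perm (Fin m)) (f : Fin m → Bool) :
    Equiv.Perm.sign (Psi τ f) = ∏ i : Fin m, (if f i then (-1 : ℤˣ) else 1) := by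
  unfold Psi
  rw [Equiv.Perm.sign_permCongr, _root_.map_mul, Equiv.Perm.sign_prodCongrLeft,
    Equiv.Perm.sign_prodCongrRight]
  have h1 : ∏ _k : Fin 2, Equiv.Perm.sign τ = 1 := by
    rw [Finset.prod_const, Finset.card_univ, Fintype.card_fin, Int.units_sq]
  rw [h1, one_mul]
  refine Finset.prod_congr rfl fun i _ => ?_
  cases hf : f i <;> simp [flip2, Equiv.Perm.sign_swap, hf]

lemma pfTerm_Psi (τ : Equiv.Perm (Fin m)) (f : Fin m → Bool) :
    pfTerm (Jm m) (Psi τ f) = 1 := by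
  unfold pfTerm
  have hprod : ∏ i : Fin m, Jm m (Psi τ f (p0 i)) (Psi τ f (p1 i))
      = ∏ i : Fin m, (if f i then (-1 : ℝ) else 1) := by
    refine Finset.prod_congr rfl fun i _ => ?_
    rw [Psi_p0, Psi_p1]
    cases hf : f i
    · simp only [hf, Bool.false_eq_true, if_false]
      rw [Jm_apply, if_pos (by simp [Fin.lt_def])]
    · simp only [hf, if_true]
      rw [Jm_apply, if_neg (by simp [Fin.lt_def]), if_pos (by simp [Fin.lt_def])]
  rw [hprod, sign_Psi]
  have hcast : ((((∏ i : Fin m, (if f i then (-1 : ℤˣ) else 1)) : ℤˣ) : ℤ) : ℝ)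
      = ∏ i : Fin m, (if f i then (-1 : ℝ) else 1) := by
    rw [Units.coe_prod]
    push_cast
    refine Finset.prod_congr rfl fun i _ => ?_
    cases f i <;> simp
  rw [hcast, ← Finset.prod_mul_distrib]
  refine Finset.prod_eq_one fun i _ => ?_
  cases f i <;> norm_num


def u (σ : Equiv.Perm (Fin (2 * m))) : Fin m → Fin m := fun i => blk (σ (p0 i))

lemma u_inj {σ : Equiv.Perm (Fin (2 * m))} (hQ : Q σ) : Function.Injective (u σ) := by
  intro i j h
  by_contra hne
  have hQi := hQ i
  have hQj := hQ j
  have huv : (u σ i).val = (u σ j).val := congrArg Fin.val h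
  simp only [u, blk_val] at huv
  have d1 : (σ (p0 i)).val ≠ (σ (p1 i)).val :=
    fun hh => p0_ne_p1 i i (σ.injective (Fin.ext hh))
  have d2 : (σ (p0 j)).val ≠ (σ (p1 j)).val :=
    fun hh => p0_ne_p1 j j (σ.injective (Fin.ext hh))
  have hij : i.val ≠ j.val := fun hh => hne (Fin.ext hh)
  have d3 : (σ (p0 i)).val ≠ (σ (p0 j)).val := fun hh => by
    have := σ.injective (Fin.ext hh)
    rw [Fin.ext_iff] at this; simp at this; omega
  have d4 : (σ (p0 i)).val ≠ (σ (p1 j)).val :=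
    fun hh => p0_ne_p1 i j (σ.injective (Fin.ext hh))
  have d5 : (σ (p1 i)).val ≠ (σ (p0 j)).val :=
    fun hh => p0_ne_p1 j i (σ.injective (Fin.ext hh)).symm
  have d6 : (σ (p1 i)).val ≠ (σ (p1 j)).val := fun hh => by
    have := σ.injective (Fin.ext hh)
    rw [Fin.ext_iff] at this; simp at this; omega
  omega

open scoped Classical in
noncomputable def tauOf (σ : Equiv.Perm (Fin (2 * m))) : Equiv.Perm (Fin m) :=
  if h : Function.Bijective (u σ) then Equiv.ofBijective _ h else 1

lemma tauOf_apply {σ : Equiv.Perm (Fin (2 * m))} (hQ : Q σ) (i : Fin m) :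
    tauOf σ i = blk (σ (p0 i)) := by
  unfold tauOf
  rw [dif_pos (Finite.injective_iff_bijective.1 (u_inj hQ))]
  rfl

def flOf (σ : Equiv.Perm (Fin (2 * m))) : Fin m → Bool :=
  fun i => decide ((σ (p1 i)).val < (σ (p0 i)).val)

lemma Psi_decomp {σ : Equiv.Perm (Fin (2 * m))} (hQ : Q σ) :
    Psi (tauOf σ) (flOf σ) = σ := by
  apply Equiv.ext
  intro p
  have hQb := hQ (blk p)
  have hd : (σ (p0 (blk p))).val ≠ (σ (p1 (blk p))).val :=
    fun hh => p0_ne_p1 _ _ (σ.injective (Fin.ext hh))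
  rcases mem_block p with hp | hp
  · rw [hp, Psi_p0, tauOf_apply hQ]
    by_cases hlt : (σ (p1 (blk p))).val < (σ (p0 (blk p))).val
    · rw [if_pos (by simp [flOf, hlt])]
      apply Fin.ext; simp; omega
    · rw [if_neg (by simp [flOf, hlt])]
      apply Fin.ext; simp; omega
  · rw [hp, Psi_p1, tauOf_apply hQ]
    by_cases hlt : (σ (p1 (blk p))).val < (σ (p0 (blk p))).val
    · rw [if_pos (by simp [flOf, hlt])]
      apply Fin.ext; simp; omega
    · rw [if_neg (by simp [flOf, hlt])]
      apply Fin.ext; simp; omega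

lemma Q_Psi (τ : Equiv.Perm (Fin m)) (f : Fin m → Bool) : Q (Psi τ f) := by
  intro i
  rw [Psi_p0, Psi_p1]
  cases hf : f i <;> simp <;> omega

lemma tauOf_Psi (τ : Equiv.Perm (Fin m)) (f : Fin m → Bool) : tauOf (Psi τ f) = τ := by
  apply Equiv.ext
  intro i
  rw [tauOf_apply (Q_Psi τ f), Psi_p0]
  cases hf : f i <;> simp only [hf, Bool.false_eq_true, if_false, if_true] <;>
    (apply Fin.ext; simp only [blk_val, p0_val, p1_val]; omega)

lemma flOf_Psi (τ : Equiv.Perm (Fin m)) (f : Fin m → Bool) : flOf (Psi τ f) = f := by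
  funext i
  unfold flOf
  rw [Psi_p0, Psi_p1]
  cases hf : f i
  · simp only [Bool.false_eq_true, if_false]
    rw [decide_eq_false_iff_not]
    simp
  · simp only [if_true]
    rw [decide_eq_true_eq]
    simp

lemma sum_Q : ∑ σ ∈ Finset.univ.filter (fun σ => Q σ), pfTerm (Jm m) σ
    = ((2 ^ m * Nat.factorial m : ℕ) : ℝ) := by
  rw [Finset.sum_bij' (fun σ _ => (tauOf σ, flOf σ))
    (fun (x : Equiv.Perm (Fin m) × (Fin m → Bool)) _ => Psi x.1 x.2)
    (fun σ hσ => Finset.mem_univ _)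
    (fun x hx => by simp only [Finset.mem_filter, Finset.mem_univ, true_and]; exact Q_Psi x.1 x.2)
    (fun σ hσ => Psi_decomp (by simpa using hσ))
    (fun x hx => Prod.ext (tauOf_Psi x.1 x.2) (flOf_Psi x.1 x.2))
    (g := fun _ => (1 : ℝ))
    (fun σ hσ => by
      conv_lhs => rw [← Psi_decomp (show Q σ by simpa using hσ)]
      exact pfTerm_Psi _ _)]
  rw [Finset.sum_const, Finset.card_univ, nsmul_eq_mul, mul_one]
  congr 1
  rw [Fintype.card_prod, Fintype.card_perm, Fintype.card_fun]
  simp [Fintype.card_fin, Nat.mul_comm]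

lemma sum_pfTerm_J : ∑ σ : Equiv.Perm (Fin (2 * m)), pfTerm (Jm m) σ
    = 2 ^ m * (Nat.factorial m : ℝ) := by
  rw [← Finset.sum_filter_add_sum_filter_not Finset.univ (fun σ => Q σ) (pfTerm (Jm m))]
  rw [sum_notQ, add_zero, sum_Q]
  push_cast
  ring


lemma pfaffian_eq (A : Matrix (Fin (2 * m)) (Fin (2 * m)) ℝ) :
    pfaffian A = (1 / (2 ^ m * (Nat.factorial m : ℝ))) * ∑ σ, pfTerm A σ := rfl

lemma denom_ne : (2 ^ m * (Nat.factorial m : ℝ)) ≠ 0 := by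
  have := Nat.factorial_pos m
  positivity

lemma pf_J : pfaffian (Jm m) = 1 := by
  rw [pfaffian_eq, sum_pfTerm_J, one_div, inv_mul_cancel₀ denom_ne]

lemma pfaffian_smul (c : ℝ) (A : Matrix (Fin (2 * m)) (Fin (2 * m)) ℝ) :
    pfaffian (c • A) = c ^ m * pfaffian A := by
  rw [pfaffian_eq, pfaffian_eq]
  have h : ∀ σ : Equiv.Perm (Fin (2 * m)), pfTerm (c • A) σ = c ^ m * pfTerm A σ := by
    intro σ
    unfold pfTerm
    simp only [Matrix.smul_apply, smul_eq_mul]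
    rw [Finset.prod_mul_distrib, Finset.prod_const, Finset.card_univ, Fintype.card_fin]
    ring
  rw [Finset.sum_congr rfl fun σ _ => h σ, ← Finset.mul_sum]
  ring

lemma pfaffian_continuous (B C : Matrix (Fin (2 * m)) (Fin (2 * m)) ℝ) :
    Continuous fun s : ℝ => pfaffian (B + s • C) := by
  have hfun : (fun s : ℝ => pfaffian (B + s • C))
      = fun s => (1 / (2 ^ m * (Nat.factorial m : ℝ))) *
        ∑ σ : Equiv.Perm (Fin (2 * m)), ((Equiv.Perm.sign σ : ℤ) : ℝ) *
          ∏ i : Fin m, (B (σ (p0 i)) (σ (p1 i)) + s * C (σ (p0 i)) (σ (p1 i))) := by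
    funext s
    rw [pfaffian_eq]
    unfold pfTerm
    simp only [Matrix.add_apply, Matrix.smul_apply, smul_eq_mul]
  rw [hfun]
  refine continuous_const.mul (continuous_finset_sum _ fun σ _ => continuous_const.mul
    (continuous_finset_prod _ fun i _ => continuous_const.add
      (continuous_id.mul continuous_const)))

lemma eventually_pos (θ' : Matrix (Fin (2 * m)) (Fin (2 * m)) ℝ) :
    ∀ᶠ t : ℕ in Filter.atTop, 0 < pfaffian (θ' + (t : ℝ) • Jm m) := by
  have hcont := pfaffian_continuous (Jm m) θ'
  have h0 : pfaffian (Jm m + (0 : ℝ) • θ') = 1 := by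
    rw [zero_smul, add_zero, pf_J]
  have hev : ∀ᶠ s : ℝ in nhds 0, 0 < pfaffian (Jm m + s • θ') := by
    have hca := hcont.continuousAt (x := 0)
    rw [ContinuousAt, h0] at hca
    exact hca.eventually (eventually_gt_nhds one_pos)
  rw [Metric.eventually_nhds_iff] at hev
  obtain ⟨ε, hε, hball⟩ := hev
  filter_upwards [Filter.eventually_ge_atTop (⌈ε⁻¹⌉₊ + 1)] with t ht
  have ht0 : 0 < t := by omega
  have htR : (0 : ℝ) < t := by exact_mod_cast ht0
  have hlt : ε⁻¹ < (t : ℝ) := by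
    calc ε⁻¹ ≤ (⌈ε⁻¹⌉₊ : ℝ) := Nat.le_ceil _
    _ < ((⌈ε⁻¹⌉₊ + 1 : ℕ) : ℝ) := by push_cast; linarith
    _ ≤ t := by exact_mod_cast ht
  have hinv : (t : ℝ)⁻¹ < ε := (inv_lt_comm₀ hε htR).1 hlt
  have hdist : dist ((t : ℝ)⁻¹) 0 < ε := by
    rw [Real.dist_eq, sub_zero, abs_of_pos (inv_pos.2 htR)]
    exact hinv
  have key := hball hdist
  have heq : θ' + (t : ℝ) • Jm m = (t : ℝ) • (Jm m + (t : ℝ)⁻¹ • θ') := by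
    rw [smul_add, smul_smul, mul_inv_cancel₀ (ne_of_gt htR), one_smul, add_comm]
  rw [heq, pfaffian_smul]
  exact mul_pos (pow_pos htR m) key

end PfAux

/-- For any real skew-symmetric n×n matrix θ there is a positive integer t such
that every Pfaffian minor of θ + tZ is strictly positive, where Z is the
skew-symmetric matrix with all entries above the diagonal equal to 1. -/
theorem stmt_9 {n : ℕ} (θ : Matrix (Fin n) (Fin n) ℝ) (hθ : θᵀ = -θ) :
    ∃ t : ℕ, 0 < t ∧
      ∀ (m : ℕ), 1 ≤ m → 2 * m ≤ n → ∀ I : Fin (2 * m) → Fin n, StrictMono I →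
        0 < pfaffian
          (((θ + (t : ℝ) •
            (Matrix.of fun i j : Fin n =>
              if i < j then (1 : ℝ) else if j < i then -1 else 0))).submatrix I I) := by
  have key : ∀ (m : ℕ) (I : Fin (2 * m) → Fin n), StrictMono I →
      ∀ᶠ t : ℕ in Filter.atTop, 0 < pfaffian
        (((θ + (t : ℝ) •
          (Matrix.of fun i j : Fin n =>
            if i < j then (1 : ℝ) else if j < i then -1 else 0))).submatrix I I) := by
    intro m I hI
    have hsub : ∀ t : ℕ, ((θ + (t : ℝ) •
        (Matrix.of fun i j : Fin n =>
          if i < j then (1 : ℝ) else if j < i then -1 else 0))).submatrix I I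
        = θ.submatrix I I + (t : ℝ) • PfAux.Jm m := by
      intro t
      ext i j
      simp only [Matrix.submatrix_apply, Matrix.add_apply, Matrix.smul_apply, Matrix.of_apply,
        smul_eq_mul, PfAux.Jm]
      congr 1
      rw [if_congr hI.lt_iff_lt rfl (if_congr hI.lt_iff_lt rfl rfl)]
    simp only [hsub]
    exact PfAux.eventually_pos _
  have big : ∀ᶠ t : ℕ in Filter.atTop, ∀ m ∈ Finset.range (n + 1),
      ∀ I : Fin (2 * m) → Fin n, StrictMono I →
        0 < pfaffian
          (((θ + (t : ℝ) •
            (Matrix.of fun i j : Fin n =>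
              if i < j then (1 : ℝ) else if j < i then -1 else 0))).submatrix I I) := by
    rw [Filter.eventually_all_finset]
    intro m _
    rw [Filter.eventually_all]
    intro I
    by_cases hI : StrictMono I
    · exact (key m I hI).mono fun t h _ => h
    · exact Filter.Eventually.of_forall fun t h => absurd h hI
  obtain ⟨t, ht⟩ := ((Filter.eventually_gt_atTop 0).and big).exists
  exact ⟨t, ht.1, fun m h1 h2 I hI => ht.2 m (Finset.mem_range.2 (by omega)) I hI⟩
end
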